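/- Let A and N be real 3×3 matrices and let τ₁, τ₂ ∈ ℝ³ be linearly independent. Set ν = (τ₁ × τ₂)/‖τ₁ × τ₂‖, P = I₃ − ν νᵀ, and for t near 0 define n(t) = (((I + tA)τ₁) × ((I + tA)τ₂)) / ‖((I + tA)τ₁) × ((I + tA)τ₂)‖, P(t) = I₃ − n(t) n(t)ᵀ, and D(t) = tr( P(t) ((I + tA)ᵀ)⁻¹ N ). Then D is differentiable at t = 0 and D′(0) = −tr( P Aᵀ P N ) + ⟨P N ν, P Aᵀ ν⟩. -/

import Mathlib

open Matrix

section Stmt14Aux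
attribute [local instance] Matrix.linftyOpNormedRing Matrix.linftyOpNormedAlgebra

private lemma stmt14_smulV (a b : ℝ) (x y : Fin 3 → ℝ) :
    vecMulVec (a • x) (b • y) = (a * b) • vecMulVec x y := by
  ext i j
  simp [vecMulVec_apply]
  ring

private lemma stmt14_cross_deriv (A : Matrix (Fin 3) (Fin 3) ℝ) (τ₁ τ₂ : Fin 3 → ℝ) (i : Fin 3) :
    HasDerivAt (fun t : ℝ => crossProduct ((1 + t • A).mulVec τ₁) ((1 + t • A).mulVec τ₂) i)
      ((crossProduct (A.mulVec τ₁) τ₂ + crossProduct τ₁ (A.mulVec τ₂)) i) 0 := by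
  have hu : ∀ (τ : Fin 3 → ℝ) (i : Fin 3),
      HasDerivAt (fun t : ℝ => (1 + t • A).mulVec τ i) (A.mulVec τ i) 0 := by
    intro τ i
    have : (fun t : ℝ => (1 + t • A).mulVec τ i) = fun t : ℝ => τ i + t * (A.mulVec τ i) := by
      funext t
      simp [Matrix.add_mulVec, Matrix.smul_mulVec]
    rw [this]
    simpa using (hasDerivAt_mul_const (A.mulVec τ i)).const_add (τ i)
  have h0 : ∀ τ : Fin 3 → ℝ, (1 + (0:ℝ) • A).mulVec τ = τ := by intro τ; simp
  fin_cases i <;>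
    simp only [cross_apply, Pi.add_apply, Matrix.cons_val_zero, Matrix.cons_val_one,
      Matrix.head_cons, Matrix.cons_val_two, Matrix.tail_cons, Fin.zero_eta, Fin.mk_one, Fin.reduceFinMk] <;>
  · refine (((hu _ _).fun_mul (hu _ _)).fun_sub ((hu _ _).fun_mul (hu _ _))).congr_deriv ?_
    simp [h0]
    ring

private lemma stmt14_cross_eq (A : Matrix (Fin 3) (Fin 3) ℝ) (τ₁ τ₂ : Fin 3 → ℝ) :
    crossProduct (A.mulVec τ₁) τ₂ + crossProduct τ₁ (A.mulVec τ₂)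
      = A.trace • crossProduct τ₁ τ₂ - Aᵀ.mulVec (crossProduct τ₁ τ₂) := by
  funext i
  fin_cases i <;>
    simp [cross_apply, Matrix.mulVec, dotProduct, Matrix.trace, Matrix.diag,
      Fin.sum_univ_three, Matrix.transpose_apply] <;> ring


private lemma K1 (M : Matrix (Fin 3) (Fin 3) ℝ) (x y : Fin 3 → ℝ) :
    M * vecMulVec x y = vecMulVec (M.mulVec x) y := by
  ext i j
  simp [Matrix.mul_apply, vecMulVec_apply, Matrix.mulVec, dotProduct, Fin.sum_univ_three]
  ring

private lemma K2 (M : Matrix (Fin 3) (Fin 3) ℝ) (x y : Fin 3 → ℝ) :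
    vecMulVec x y * M = vecMulVec x (Mᵀ.mulVec y) := by
  ext i j
  simp [Matrix.mul_apply, vecMulVec_apply, Matrix.mulVec, dotProduct, Fin.sum_univ_three,
    Matrix.transpose_apply]
  ring

private lemma K4 (x y : Fin 3 → ℝ) : (vecMulVec x y)ᵀ = vecMulVec y x := by
  ext i j; simp [vecMulVec_apply, Matrix.transpose_apply, mul_comm]

private lemma K5 (x y z : Fin 3 → ℝ) : (vecMulVec x y).mulVec z = (y ⬝ᵥ z) • x := by
  funext i
  simp [vecMulVec_apply, Matrix.mulVec, dotProduct, Fin.sum_univ_three]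
  ring

private lemma K6 (a : ℝ) (x y : Fin 3 → ℝ) : vecMulVec x (a • y) = a • vecMulVec x y := by
  ext i j; simp [vecMulVec_apply]; ring

private lemma K6' (a : ℝ) (x y : Fin 3 → ℝ) : vecMulVec (a • x) y = a • vecMulVec x y := by
  ext i j; simp [vecMulVec_apply]; ring

private lemma K7 (x y : Fin 3 → ℝ) : (vecMulVec x y).trace = y ⬝ᵥ x := by
  simp [Matrix.trace, Matrix.diag, vecMulVec_apply, dotProduct, Fin.sum_univ_three]
  ring

private lemma B2 (M : Matrix (Fin 3) (Fin 3) ℝ) (x y : Fin 3 → ℝ) :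
    M.mulVec x ⬝ᵥ y = x ⬝ᵥ Mᵀ.mulVec y := by
  simp [Matrix.mulVec, dotProduct, Matrix.transpose_apply, Fin.sum_univ_three]
  ring

private lemma B3 (M : Matrix (Fin 3) (Fin 3) ℝ) (x : Fin 3 → ℝ) :
    x ⬝ᵥ Mᵀ.mulVec x = x ⬝ᵥ M.mulVec x := by
  simp [Matrix.mulVec, dotProduct, Matrix.transpose_apply, Fin.sum_univ_three]
  ring

private lemma B1 (M : Matrix (Fin 3) (Fin 3) ℝ) (x y : Fin 3 → ℝ) :
    Mᵀ.mulVec x ⬝ᵥ y = x ⬝ᵥ M.mulVec y := by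
  simp [Matrix.mulVec, dotProduct, Matrix.transpose_apply, Fin.sum_univ_three]
  ring

set_option maxHeartbeats 2000000 in
private lemma stmt14_key (A N : Matrix (Fin 3) (Fin 3) ℝ) (c : Fin 3 → ℝ)
    (hq : c ⬝ᵥ c ≠ 0) :
    -(((1 - (c ⬝ᵥ c)⁻¹ • vecMulVec c c) * Aᵀ * (1 - (c ⬝ᵥ c)⁻¹ • vecMulVec c c) * N).trace)
      + (c ⬝ᵥ c)⁻¹ * (((1 - (c ⬝ᵥ c)⁻¹ • vecMulVec c c) * N).mulVec c ⬝ᵥ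
          ((1 - (c ⬝ᵥ c)⁻¹ • vecMulVec c c) * Aᵀ).mulVec c)
    = ((-((c ⬝ᵥ c)⁻¹ • (vecMulVec (A.trace • c - Aᵀ.mulVec c) c +
            vecMulVec c (A.trace • c - Aᵀ.mulVec c)) +
          (-((A.trace • c - Aᵀ.mulVec c) ⬝ᵥ c + c ⬝ᵥ (A.trace • c - Aᵀ.mulVec c)) / (c ⬝ᵥ c) ^ 2) •
            vecMulVec c c) +
        (1 - (c ⬝ᵥ c)⁻¹ • vecMulVec c c) * -Aᵀ) * N).trace := by
  simp only [sub_mul, mul_sub, one_mul, mul_one, add_mul, neg_mul, mul_neg,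
    Matrix.smul_mul, Matrix.mul_smul, Matrix.mul_assoc, K2, K1, K4, K5, K6, K6',
    Matrix.transpose_mul, Matrix.transpose_transpose, Matrix.transpose_one,
    Matrix.sub_mulVec, Matrix.add_mulVec, Matrix.smul_mulVec, ← Matrix.mulVec_mulVec,
    Matrix.one_mulVec, Matrix.trace_sub, Matrix.trace_add, Matrix.trace_neg, Matrix.trace_smul,
    K7, dotProduct_sub, sub_dotProduct, dotProduct_smul, smul_dotProduct, smul_eq_mul,
    smul_smul]
  simp only [Matrix.mulVec_sub, Matrix.mulVec_smul, Matrix.mulVec_mulVec, B2, B3,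
    ← Matrix.transpose_mul, Matrix.transpose_transpose, Matrix.mulVec_mulVec,
    dotProduct_sub, sub_dotProduct, dotProduct_smul, smul_dotProduct, smul_eq_mul]
  generalize c ⬝ᵥ (Nᵀ * A) *ᵥ c = x1
  generalize c ⬝ᵥ (N * Aᵀ) *ᵥ c = x2
  generalize c ⬝ᵥ (A * N) *ᵥ c = x3
  generalize c ⬝ᵥ A *ᵥ c = a
  generalize c ⬝ᵥ N *ᵥ c = b
  generalize (Aᵀ * N).trace = T
  generalize A.trace = al
  generalize hqq : c ⬝ᵥ c = q at hq ⊢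
  field_simp
  ring

end Stmt14Aux

open Matrix in
theorem stmt14 (A N : Matrix (Fin 3) (Fin 3) ℝ)
    (τ₁ τ₂ : Fin 3 → ℝ) (hτ : LinearIndependent ℝ ![τ₁, τ₂])
    (ν : Fin 3 → ℝ)
    (hν : ν = (Real.sqrt (crossProduct τ₁ τ₂ ⬝ᵥ crossProduct τ₁ τ₂))⁻¹ • crossProduct τ₁ τ₂)
    (P : Matrix (Fin 3) (Fin 3) ℝ) (hP : P = 1 - vecMulVec ν ν)
    (n : ℝ → Fin 3 → ℝ)
    (hn : ∀ t : ℝ, n t =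
      (Real.sqrt (crossProduct ((1 + t • A).mulVec τ₁) ((1 + t • A).mulVec τ₂) ⬝ᵥ
        crossProduct ((1 + t • A).mulVec τ₁) ((1 + t • A).mulVec τ₂)))⁻¹ •
        crossProduct ((1 + t • A).mulVec τ₁) ((1 + t • A).mulVec τ₂))
    (Pt : ℝ → Matrix (Fin 3) (Fin 3) ℝ) (hPt : ∀ t, Pt t = 1 - vecMulVec (n t) (n t))
    (D : ℝ → ℝ)
    (hD : ∀ t : ℝ, D t = (Pt t * ((1 + t • A)ᵀ)⁻¹ * N).trace) :
    HasDerivAt D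
      (-(P * Aᵀ * P * N).trace + (P * N).mulVec ν ⬝ᵥ (P * Aᵀ).mulVec ν) 0 := by
  letI : NormedRing (Matrix (Fin 3) (Fin 3) ℝ) := Matrix.linftyOpNormedRing
  letI : NormedAlgebra ℝ (Matrix (Fin 3) (Fin 3) ℝ) := Matrix.linftyOpNormedAlgebra
  -- notation
  set c : ℝ → Fin 3 → ℝ :=
    fun t => crossProduct ((1 + t • A).mulVec τ₁) ((1 + t • A).mulVec τ₂) with hc
  set q : ℝ → ℝ := fun t => c t ⬝ᵥ c t with hqdef
  have hc0 : c 0 = crossProduct τ₁ τ₂ := by simp [hc]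
  have hcne : c 0 ≠ 0 := by
    rw [hc0]; exact crossProduct_ne_zero_iff_linearIndependent.mpr hτ
  have hqnn : ∀ t, 0 ≤ q t := fun t => Finset.sum_nonneg fun i _ => mul_self_nonneg _
  have hq0 : q 0 ≠ 0 := fun h => hcne (dotProduct_self_eq_zero.mp h)
  -- global reformulation of D
  have hnn : ∀ t, vecMulVec (n t) (n t) = (q t)⁻¹ • vecMulVec (c t) (c t) := by
    intro t
    rw [hn t, stmt14_smulV]
    congr 1
    rw [← mul_inv, Real.mul_self_sqrt (hqnn t)]
  have hDeq : D = fun t =>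
      (((1 : Matrix (Fin 3) (Fin 3) ℝ) - (q t)⁻¹ • vecMulVec (c t) (c t)) *
        Ring.inverse ((1 : Matrix (Fin 3) (Fin 3) ℝ) + t • Aᵀ) * N).trace := by
    funext t
    rw [hD t, hPt t, hnn t,
      show ((1 + t • A)ᵀ) = 1 + t • Aᵀ by
        rw [Matrix.transpose_add, Matrix.transpose_one, Matrix.transpose_smul],
      Matrix.nonsing_inv_eq_ringInverse]
  -- derivatives
  set c' : Fin 3 → ℝ := crossProduct (A.mulVec τ₁) τ₂ + crossProduct τ₁ (A.mulVec τ₂) with hc'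
  have hci : ∀ i, HasDerivAt (fun t => c t i) (c' i) 0 := fun i => stmt14_cross_deriv A τ₁ τ₂ i
  have hq' : HasDerivAt q (c' ⬝ᵥ c 0 + c 0 ⬝ᵥ c') 0 := by
    have h := HasDerivAt.fun_sum (u := (Finset.univ : Finset (Fin 3)))
      (fun i _ => (hci i).fun_mul (hci i))
    rw [Finset.sum_add_distrib] at h
    simpa only [hqdef, dotProduct] using h
  have hqinv : HasDerivAt (fun t => (q t)⁻¹) (-(c' ⬝ᵥ c 0 + c 0 ⬝ᵥ c') / q 0 ^ 2) 0 :=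
    hq'.inv hq0
  have hW : HasDerivAt (fun t => vecMulVec (c t) (c t))
      (vecMulVec c' (c 0) + vecMulVec (c 0) c') 0 := by
    have key : ∀ (x y : Fin 3 → ℝ), vecMulVec x y =
        ∑ i : Fin 3, ∑ j : Fin 3, (x i * y j) • Matrix.single i j (1:ℝ) := by
      intro x y
      ext i j
      simp [vecMulVec_apply, Matrix.single, Matrix.sum_apply, Fin.sum_univ_three]
      fin_cases i <;> fin_cases j <;> simp
    have h : HasDerivAt (fun t => ∑ i : Fin 3, ∑ j : Fin 3,
        (c t i * c t j) • Matrix.single i j (1:ℝ))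
        (∑ i : Fin 3, ∑ j : Fin 3,
          (c' i * c 0 j + c 0 i * c' j) • Matrix.single i j (1:ℝ)) 0 := by
      apply HasDerivAt.fun_sum; intro i _
      apply HasDerivAt.fun_sum; intro j _
      exact ((hci i).fun_mul (hci j)).smul_const _
    rw [show (fun t => vecMulVec (c t) (c t)) =
        (fun t => ∑ i : Fin 3, ∑ j : Fin 3, (c t i * c t j) • Matrix.single i j (1:ℝ)) from
      funext fun t => key (c t) (c t)]
    convert h using 1
    rw [key, key, ← Finset.sum_add_distrib]
    congr 1; funext i
    rw [← Finset.sum_add_distrib]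
    congr 1; funext j
    rw [← add_smul]
  have hPtD : HasDerivAt (fun t => (1 : Matrix (Fin 3) (Fin 3) ℝ) - (q t)⁻¹ • vecMulVec (c t) (c t))
      (-((q 0)⁻¹ • (vecMulVec c' (c 0) + vecMulVec (c 0) c') +
        (-(c' ⬝ᵥ c 0 + c 0 ⬝ᵥ c') / q 0 ^ 2) • vecMulVec (c 0) (c 0))) 0 := by
    have := (hqinv.fun_smul hW).const_sub (1 : Matrix (Fin 3) (Fin 3) ℝ)
    exact this
  have hM : HasDerivAt (fun t : ℝ => (1 : Matrix (Fin 3) (Fin 3) ℝ) + t • Aᵀ) Aᵀ 0 := by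
    refine (((hasDerivAt_id (0:ℝ)).smul_const Aᵀ).const_add 1).congr_deriv ?_; simp
  have hInv : HasDerivAt (fun t : ℝ => Ring.inverse ((1 : Matrix (Fin 3) (Fin 3) ℝ) + t • Aᵀ))
      (-Aᵀ) 0 := by
    have hg := hasFDerivAt_ringInverse (𝕜 := ℝ) (1 : (Matrix (Fin 3) (Fin 3) ℝ)ˣ)
    have h0 : ((1 : (Matrix (Fin 3) (Fin 3) ℝ)ˣ) : Matrix (Fin 3) (Fin 3) ℝ)
        = 1 + (0:ℝ) • Aᵀ := by simp
    rw [h0] at hg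
    refine (hg.comp_hasDerivAt 0 hM).congr_deriv ?_; simp
  have hX := (hPtD.fun_mul hInv).mul_const N
  rw [hDeq]
  have hfinal := (LinearMap.toContinuousLinearMap
    (Matrix.traceLinearMap (Fin 3) ℝ ℝ)).hasFDerivAt.comp_hasDerivAt 0 hX
  simp only [Function.comp_def] at hfinal
  refine hfinal.congr_deriv (Eq.symm ?_)
  simp only [LinearMap.coe_toContinuousLinearMap', Matrix.traceLinearMap_apply,
    zero_smul, add_zero, Ring.inverse_one, mul_one]
  have hce : c' = A.trace • c 0 - Aᵀ.mulVec (c 0) := by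
    rw [hc', hc0]; exact stmt14_cross_eq A τ₁ τ₂
  have hvv : vecMulVec ν ν = (c 0 ⬝ᵥ c 0)⁻¹ • vecMulVec (c 0) (c 0) := by
    rw [hν, ← hc0, stmt14_smulV, ← mul_inv, Real.mul_self_sqrt (by simpa [hqdef] using hqnn 0)]
  have hdot : (P * N).mulVec ν ⬝ᵥ (P * Aᵀ).mulVec ν
      = (c 0 ⬝ᵥ c 0)⁻¹ * ((P * N).mulVec (c 0) ⬝ᵥ (P * Aᵀ).mulVec (c 0)) := by
    rw [hν, ← hc0, Matrix.mulVec_smul, Matrix.mulVec_smul, smul_dotProduct, dotProduct_smul,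
      smul_eq_mul, smul_eq_mul, ← mul_assoc, ← mul_inv,
      Real.mul_self_sqrt (by simpa [hqdef] using hqnn 0)]
  rw [hdot, hP, hvv, hce]
  simp only [hqdef]
  exact stmt14_key A N (c 0) (by simpa [hqdef] using hq0)
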